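/- Let G ≥ 1 and for g = 0,...,G let n_g > 0 with n_0 = n = Σ_{g=1}^G n_g. Let δ_0,...,δ_G ∈ ℝ^p and nonnegative constants ρ_0,...,ρ_G, φ_1,...,φ_G, μ_0 > 0, μ_1,...,μ_G > 0, ξ_0,...,ξ_G ≥ 0, w_0,...,w_G ≥ 0. Suppose for t-indexed sequences: ‖δ_g^{(t+1)}‖₂ ≤ ρ_g‖δ_g^{(t)}‖₂ + ξ_g w_g + φ_g‖δ_0^{(t)}‖₂ for g ≥ 1, and ‖δ_0^{(t+1)}‖₂ ≤ ρ_0‖δ_0^{(t)}‖₂ + ξ_0 w_0 + μ_0 Σ_{g=1}^G (φ_g/μ_g)‖δ_g^{(t)}‖₂. Define ρ = max(ρ_0 + Σ_{g=1}^G √(n_g/n) φ_g, max_{g≥1}[ρ_g + √(n/n_g)(μ_0/μ_g)φ_g]). Then Σ_{g=0}^G √(n_g/n)‖δ_g^{(t+1)}‖₂ ≤ ρ Σ_{g=0}^G √(n_g/n)‖δ_g^{(t)}‖₂ + Σ_{g=0}^G √(n_g/n) ξ_g w_g. -/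

import Mathlib

/-- Combining the per-group recursions into a single recursion on the weighted
error sum, with contraction factor `ρ`. -/
theorem stmt_6 {p G : ℕ} (hG : 1 ≤ G)
    (n : Fin G → ℝ) (hn : ∀ g, 0 < n g) (ntot : ℝ) (hntot : ntot = ∑ g, n g)
    (d0 d0' : EuclideanSpace ℝ (Fin p)) (d d' : Fin G → EuclideanSpace ℝ (Fin p))
    (ρ0 : ℝ) (ρ φ : Fin G → ℝ) (μ0 : ℝ) (μ : Fin G → ℝ)
    (ξ0 w0 : ℝ) (ξ w : Fin G → ℝ)
    (hρ0 : 0 ≤ ρ0) (hρ : ∀ g, 0 ≤ ρ g) (hφ : ∀ g, 0 ≤ φ g)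
    (hμ0 : 0 < μ0) (hμ : ∀ g, 0 < μ g)
    (hξ0 : 0 ≤ ξ0) (hξ : ∀ g, 0 ≤ ξ g) (hw0 : 0 ≤ w0) (hw : ∀ g, 0 ≤ w g)
    (hrecg : ∀ g, ‖d' g‖ ≤ ρ g * ‖d g‖ + ξ g * w g + φ g * ‖d0‖)
    (hrec0 : ‖d0'‖ ≤ ρ0 * ‖d0‖ + ξ0 * w0 + μ0 * ∑ g, (φ g / μ g) * ‖d g‖)
    (ρbar : ℝ)
    (hρbar : ρbar = max (ρ0 + ∑ g, Real.sqrt (n g / ntot) * φ g)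
      (Finset.univ.sup' ⟨⟨0, hG⟩, Finset.mem_univ _⟩
        (fun g => ρ g + Real.sqrt (ntot / n g) * (μ0 / μ g) * φ g))) :
    ‖d0'‖ + ∑ g, Real.sqrt (n g / ntot) * ‖d' g‖ ≤
      ρbar * (‖d0‖ + ∑ g, Real.sqrt (n g / ntot) * ‖d g‖) +
        (ξ0 * w0 + ∑ g, Real.sqrt (n g / ntot) * (ξ g * w g)) := by
  haveI : Nonempty (Fin G) := ⟨⟨0, hG⟩⟩
  have hnt : 0 < ntot := by
    rw [hntot]; exact Finset.sum_pos (fun g _ => hn g) Finset.univ_nonempty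
  set a : Fin G → ℝ := fun g => Real.sqrt (n g / ntot) with ha_def
  have ha : ∀ g, 0 < a g := fun g => Real.sqrt_pos.2 (div_pos (hn g) hnt)
  have hainv : ∀ g, Real.sqrt (ntot / n g) = (a g)⁻¹ := by
    intro g
    rw [show ntot / n g = (n g / ntot)⁻¹ by rw [inv_div], Real.sqrt_inv]
  have hc0 : ρ0 + ∑ g, a g * φ g ≤ ρbar := by
    rw [hρbar]; exact le_max_left _ _
  have hkey : ∀ g, μ0 * (φ g / μ g) + a g * ρ g ≤ ρbar * a g := by
    intro g
    have h1 : ρ g + Real.sqrt (ntot / n g) * (μ0 / μ g) * φ g ≤ ρbar := by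
      rw [hρbar]
      exact le_max_of_le_right (Finset.le_sup'
        (fun g => ρ g + Real.sqrt (ntot / n g) * (μ0 / μ g) * φ g) (Finset.mem_univ g))
    have h2 := mul_le_mul_of_nonneg_right h1 (ha g).le
    calc μ0 * (φ g / μ g) + a g * ρ g
        = (ρ g + Real.sqrt (ntot / n g) * (μ0 / μ g) * φ g) * a g := by
          rw [hainv g]
          have h3 : (a g)⁻¹ * (μ0 / μ g) * φ g * a g = μ0 * (φ g / μ g) := by
            field_simp
            rw [mul_comm (a g) (μ g), mul_comm (a g) (φ g), mul_div_mul_right _ _ (ha g).ne']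
          rw [add_mul, ← h3]
          ring
      _ ≤ ρbar * a g := h2
  calc ‖d0'‖ + ∑ g, a g * ‖d' g‖
      ≤ (ρ0 * ‖d0‖ + ξ0 * w0 + μ0 * ∑ g, (φ g / μ g) * ‖d g‖) +
          ∑ g, a g * (ρ g * ‖d g‖ + ξ g * w g + φ g * ‖d0‖) := by
        refine add_le_add hrec0 (Finset.sum_le_sum fun g _ => ?_)
        exact mul_le_mul_of_nonneg_left (hrecg g) (ha g).le
    _ = (ρ0 + ∑ g, a g * φ g) * ‖d0‖ +
          ∑ g, (μ0 * (φ g / μ g) + a g * ρ g) * ‖d g‖ +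
          (ξ0 * w0 + ∑ g, a g * (ξ g * w g)) := by
        simp only [mul_add, add_mul, Finset.sum_add_distrib, Finset.mul_sum,
          Finset.sum_mul, div_eq_mul_inv, mul_assoc]
        ring
    _ ≤ ρbar * ‖d0‖ + ∑ g, (ρbar * a g) * ‖d g‖ +
          (ξ0 * w0 + ∑ g, a g * (ξ g * w g)) := by
        refine add_le_add (add_le_add (mul_le_mul_of_nonneg_right hc0 (norm_nonneg _))
          (Finset.sum_le_sum fun g _ => mul_le_mul_of_nonneg_right (hkey g)
            (norm_nonneg _))) le_rfl
    _ = ρbar * (‖d0‖ + ∑ g, a g * ‖d g‖) + (ξ0 * w0 + ∑ g, a g * (ξ g * w g)) := by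
        rw [mul_add, Finset.mul_sum]
        simp only [mul_assoc]
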